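/- Let L > 1 and let ε > 0, δ > 0 and μ ∈ ℝ satisfy dist(μ, ℤ) ≥ δ. Then ∑_{k ∈ ℤ} (1 + |k + μ|/ε)^{−L} ≤ (1 + δ/ε)^{−L} + 2ε ∫_ℝ (1 + |y|)^{−L} dy. -/

import Mathlib

open Real MeasureTheory Set

/-- If `L > 1`, `ε, δ > 0` and `dist(μ, ℤ) ≥ δ`, then
`∑_{k∈ℤ} (1 + |k+μ|/ε)^{−L} ≤ (1 + δ/ε)^{−L} + 2ε ∫_ℝ (1+|y|)^{−L} dy`. -/
theorem sum_translates_bound (L ε δ μ : ℝ) (hL : 1 < L) (hε : 0 < ε) (hδ : 0 < δ)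
    (hμ : ∀ m : ℤ, δ ≤ |μ - m|) :
    (∑' k : ℤ, (1 + |(k : ℝ) + μ| / ε) ^ (-L))
      ≤ (1 + δ / ε) ^ (-L) + 2 * ε * ∫ y : ℝ, (1 + |y|) ^ (-L) := by
  set f : ℝ → ℝ := fun y => (1 + |y| / ε) ^ (-L) with hfdef
  -- basic facts about f
  have hfpos : ∀ y : ℝ, 0 < 1 + |y| / ε := fun y => by positivity
  have hfmono : ∀ a b : ℝ, |a| ≤ |b| → f b ≤ f a := by
    intro a b hab
    exact Real.rpow_le_rpow_of_nonpos (hfpos a) (by gcongr) (by linarith)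
  -- integrability of f
  have hint0 : Integrable (fun y : ℝ => (1 + ‖y‖) ^ (-L)) := by
    apply integrable_one_add_norm (E := ℝ)
    simpa using hL
  have hint : Integrable f := by
    have := hint0.comp_div hε.ne'
    refine this.congr (Filter.Eventually.of_forall fun y => ?_)
    simp [hfdef, abs_div, abs_of_pos hε, Real.norm_eq_abs]
  have hfnonneg : ∀ y, 0 ≤ f y := fun y => Real.rpow_nonneg (hfpos y).le _
  -- value of the integral of f
  have hintval : (∫ y : ℝ, f y) = ε * ∫ y : ℝ, (1 + |y|) ^ (-L) := by
    have := MeasureTheory.Measure.integral_comp_div (fun y : ℝ => (1 + |y|) ^ (-L)) ε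
    rw [abs_of_pos hε, smul_eq_mul] at this
    rw [← this]
    congr 1 with y
    rw [hfdef, abs_div, abs_of_pos hε]
  have hCnn : 0 ≤ ∫ y : ℝ, (1 + |y|) ^ (-L) :=
    integral_nonneg fun y => Real.rpow_nonneg (by positivity) _
  -- the closest point
  set k₀ : ℤ := -(round μ) with hk₀
  set x : ℝ := (k₀ : ℝ) + μ with hx
  have hx2 : |x| ≤ 1 / 2 := by
    have := abs_sub_round μ
    rw [hx, hk₀]; push_cast; rwa [neg_add_eq_sub]
  have hδx : δ ≤ |x| := by
    have := hμ (round μ)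
    rwa [hx, hk₀, show ((-(round μ) : ℤ) : ℝ) + μ = μ - (round μ : ℤ) by push_cast; ring]
  -- intervals
  set I : ℤ → Set ℝ := fun k =>
    if k₀ < k then Ioc ((k : ℝ) + μ - 1/2) ((k : ℝ) + μ)
    else Ico ((k : ℝ) + μ) ((k : ℝ) + μ + 1/2) with hI
  have hImeas : ∀ k, MeasurableSet (I k) := by
    intro k; rw [hI]; dsimp only
    split <;> measurability
  have hIsub : ∀ k : ℤ, I k ⊆ Ioo ((k : ℝ) + μ - 1/2) ((k : ℝ) + μ + 1/2) := by
    intro k; rw [hI]; dsimp only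
    split
    · exact Ioc_subset_Ioo_right (by linarith)
    · exact Ico_subset_Ioo_left (by linarith)
  have hIdisj : ∀ k l : ℤ, k ≠ l → Disjoint (I k) (I l) := by
    intro k l hkl
    refine Set.disjoint_left.2 fun y hyk hyl => ?_
    have h1 := hIsub k hyk
    have h2 := hIsub l hyl
    simp only [mem_Ioo] at h1 h2
    have : |(k : ℝ) - l| < 1 := by
      rw [abs_sub_lt_iff]; constructor <;> linarith
    have h1le : (1 : ℝ) ≤ |(k : ℝ) - l| := by
      rw [show ((k : ℝ) - l) = ((k - l : ℤ) : ℝ) by push_cast; ring]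
      rw [← Int.cast_abs]
      exact_mod_cast Int.one_le_abs (sub_ne_zero.2 hkl)
    linarith
  -- the key bound for k ≠ k₀
  have hkey : ∀ k : ℤ, k ≠ k₀ → f ((k : ℝ) + μ) ≤ 2 * ∫ y in I k, f y := by
    intro k hk
    have hvol : volume (I k) = ENNReal.ofReal (1/2) := by
      rw [hI]; dsimp only; split
      · rw [Real.volume_Ioc]; norm_num
      · rw [Real.volume_Ico]; norm_num
    have hconst : ∀ y ∈ I k, f ((k : ℝ) + μ) ≤ f y := by
      intro y hy
      apply hfmono
      rw [hI] at hy; dsimp only at hy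
      rcases lt_or_ge k₀ k with h | h
      · rw [if_pos h] at hy
        have hk1 : (k₀ : ℝ) + 1 ≤ k := by exact_mod_cast h
        have hx1 : -(1/2 : ℝ) ≤ x := neg_le_of_abs_le hx2
        have hkpos : (1/2 : ℝ) ≤ (k : ℝ) + μ := by rw [hx] at hx1; linarith
        obtain ⟨hy1, hy2⟩ := hy
        rw [abs_of_nonneg (by linarith : (0:ℝ) ≤ y), abs_of_nonneg (by linarith)]
        exact hy2
      · have hlt : k < k₀ := lt_of_le_of_ne h (fun h' => hk (by omega))
        rw [if_neg (not_lt.2 h)] at hy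
        have hk1 : (k : ℝ) + 1 ≤ k₀ := by exact_mod_cast hlt
        have hx1 : x ≤ 1/2 := le_of_abs_le hx2
        have hkneg : (k : ℝ) + μ ≤ -(1/2) := by rw [hx] at hx1; linarith
        obtain ⟨hy1, hy2⟩ := hy
        rw [abs_of_nonpos (by linarith : y ≤ 0), abs_of_nonpos (by linarith)]
        linarith
    have := setIntegral_ge_of_const_le (μ := volume) (hImeas k)
      (by rw [hvol]; exact ENNReal.ofReal_ne_top) hconst (hint.integrableOn)
    rw [measureReal_def, hvol, ENNReal.toReal_ofReal (by norm_num), smul_eq_mul] at this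
    linarith
  -- bound the value at k₀
  have hk₀bound : f x ≤ (1 + δ / ε) ^ (-L) := by
    apply Real.rpow_le_rpow_of_nonpos (by positivity) (by gcongr) (by linarith)
  -- now the main estimate via finite sums
  apply tsum_le_of_sum_le' (by positivity)
  intro s
  have hstep1 : ∑ k ∈ s, f ((k : ℝ) + μ) ≤
      (1 + δ / ε) ^ (-L) + ∑ k ∈ s.erase k₀, f ((k : ℝ) + μ) := by
    by_cases hk : k₀ ∈ s
    · rw [← Finset.add_sum_erase s _ hk]
      exact add_le_add hk₀bound le_rfl
    · rw [Finset.erase_eq_of_notMem hk]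
      have : (0:ℝ) ≤ (1 + δ / ε) ^ (-L) := by positivity
      linarith
  refine hstep1.trans ?_
  gcongr
  calc ∑ k ∈ s.erase k₀, f ((k : ℝ) + μ)
      ≤ ∑ k ∈ s.erase k₀, 2 * ∫ y in I k, f y := by
        apply Finset.sum_le_sum
        intro k hk
        exact hkey k (Finset.ne_of_mem_erase hk)
    _ = 2 * ∑ k ∈ s.erase k₀, ∫ y in I k, f y := by rw [Finset.mul_sum]
    _ = 2 * ∫ y in ⋃ k ∈ s.erase k₀, I k, f y := by
        rw [integral_biUnion_finset _ (fun k _ => hImeas k)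
          (fun k _ l _ hkl => hIdisj k l hkl) (fun k _ => hint.integrableOn)]
    _ ≤ 2 * ∫ y, f y := by
        gcongr
        exact Filter.Eventually.of_forall hfnonneg
        exact Measure.restrict_le_self
    _ = 2 * ε * ∫ y : ℝ, (1 + |y|) ^ (-L) := by rw [hintval]; ring
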